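/- arXiv:1502.04923 — 4 statements merged into one kernel-verified Lean document; each statement's English description precedes it below -/
import Mathlib

section
/- Let a, b be integers with 4a³ + 27b² ≠ 0 and (x_t, y_t) an integer point on y² = x³ + ax + b. Define the height of the curve by H = max{2¹²·3⁴·|a|³, 2¹⁴·3¹²·b²} and the height of a binary quartic Q by H(Q) = max{2⁶·3⁴·|J₂(Q)|³, 2¹⁰·3¹²·J₃(Q)²}. Then for Q(u,v) = u⁴ - 6x_t u²v² - 8y_t uv³ - (3x_t² + 4a)v⁴ one has H(Q) = H. -/
noncomputable def J2 (c₀ c₁ c₂ c₃ c₄ : ℚ) : ℚ :=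
  c₂ ^ 2 / 12 - c₁ * c₃ / 4 + c₀ * c₄

noncomputable def J3 (c₀ c₁ c₂ c₃ c₄ : ℚ) : ℚ :=
  c₂ ^ 3 / 216 - c₁ * c₂ * c₃ / 48 + c₀ * c₃ ^ 2 / 16 + c₁ ^ 2 * c₄ / 16 - c₀ * c₂ * c₄ / 6

/-- the descent map preserves heights: `H(Q) = H(Y_{a,b})` for the quartic
`Q = u⁴ - 6x_t u²v² - 8y_t uv³ - (3x_t² + 4a)v⁴` associated to an integral point. -/
theorem stmt6 (a b xt yt : ℤ) (hns : 4 * a ^ 3 + 27 * b ^ 2 ≠ 0)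
    (ht : yt ^ 2 = xt ^ 3 + a * xt + b) :
    letI j2 : ℚ := J2 1 0 (-6 * (xt : ℚ)) (-8 * (yt : ℚ)) (-(3 * (xt : ℚ) ^ 2 + 4 * (a : ℚ)))
    letI j3 : ℚ := J3 1 0 (-6 * (xt : ℚ)) (-8 * (yt : ℚ)) (-(3 * (xt : ℚ) ^ 2 + 4 * (a : ℚ)))
    max (2 ^ 6 * 3 ^ 4 * |j2| ^ 3) (2 ^ 10 * 3 ^ 12 * j3 ^ 2)
      = max (2 ^ 12 * 3 ^ 4 * |(a : ℚ)| ^ 3) (2 ^ 14 * 3 ^ 12 * (b : ℚ) ^ 2) := by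
  have hQ : (yt : ℚ) ^ 2 = (xt : ℚ) ^ 3 + (a : ℚ) * xt + b := by exact_mod_cast ht
  have e2 : J2 1 0 (-6 * (xt : ℚ)) (-8 * (yt : ℚ)) (-(3 * (xt : ℚ) ^ 2 + 4 * (a : ℚ)))
      = -4 * (a : ℚ) := by unfold J2; ring
  have e3 : J3 1 0 (-6 * (xt : ℚ)) (-8 * (yt : ℚ)) (-(3 * (xt : ℚ) ^ 2 + 4 * (a : ℚ)))
      = 4 * (b : ℚ) := by unfold J3; linear_combination 4 * hQ
  show max (2 ^ 6 * 3 ^ 4 * |J2 1 0 (-6 * (xt : ℚ)) (-8 * (yt : ℚ))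
      (-(3 * (xt : ℚ) ^ 2 + 4 * (a : ℚ)))| ^ 3)
      (2 ^ 10 * 3 ^ 12 * J3 1 0 (-6 * (xt : ℚ)) (-8 * (yt : ℚ))
      (-(3 * (xt : ℚ) ^ 2 + 4 * (a : ℚ))) ^ 2) = _
  rw [e2, e3]
  have ha : |(-4 : ℚ) * (a : ℚ)| = 4 * |(a : ℚ)| := by
    rw [abs_mul]; norm_num
  rw [ha]
  congr 1 <;> ring
end

section
/- Let B₂, B₃, B₄ be rational numbers such that the quartic u⁴ + B₂u²v² + B₃uv³ + B₄v⁴ has nonzero discriminant. Define x_t = -B₂/6, y_t = -B₃/8, a₄ = -(B₄ + 3x_t²)/4, a₆ = y_t² - x_t³ - a₄x_t. Then (x_t, y_t) satisfies y_t² = x_t³ + a₄x_t + a₆, and the curve y² = x³ + a₄x + a₆ is nonsingular (4a₄³ + 27a₆² ≠ 0). -/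
/-- if the quartic `u⁴ + B₂u²v² + B₃uv³ + B₄v⁴` has nonzero discriminant,
then the descent construction yields a point `(x_t, y_t)` on a nonsingular curve
`y² = x³ + a₄x + a₆`. -/
theorem stmt8 (B₂ B₃ B₄ : ℚ)
    (hdisc : -4 * B₂ ^ 3 * B₃ ^ 2 + 16 * B₂ ^ 4 * B₄ - 27 * B₃ ^ 4
      + 144 * B₂ * B₃ ^ 2 * B₄ - 128 * B₂ ^ 2 * B₄ ^ 2 + 256 * B₄ ^ 3 ≠ 0) :
    letI xt : ℚ := -B₂ / 6
    letI yt : ℚ := -B₃ / 8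
    letI a₄ : ℚ := -(B₄ + 3 * xt ^ 2) / 4
    letI a₆ : ℚ := yt ^ 2 - xt ^ 3 - a₄ * xt
    yt ^ 2 = xt ^ 3 + a₄ * xt + a₆ ∧ 4 * a₄ ^ 3 + 27 * a₆ ^ 2 ≠ 0 := by
  refine ⟨by ring, fun h => hdisc ?_⟩
  linear_combination (-4096 : ℚ) * h
end

section
/- Let a, b be integers with 4a³ + 27b² ≠ 0 such that there is no prime p with p⁴ | a and p⁶ | b. Let (x_t, y_t) be an integer solution of y² = x³ + ax + b. Then there is no prime p > 3 such that p² | 6x_t, p³ | 8y_t, and p⁴ | 3x_t² + 4a simultaneously; i.e., the associated quartic u⁴ - 6x_t u²v² - 8y_t uv³ - (3x_t² + 4a)v⁴ is minimal away from {2,3}. -/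
/-- if `y² = x³ + ax + b` is minimal (no prime `p` with `p⁴ ∣ a` and `p⁶ ∣ b`)
and nonsingular, then for any integral point `(x_t, y_t)` the associated quartic
`u⁴ - 6x_t u²v² - 8y_t uv³ - (3x_t² + 4a)v⁴` is minimal away from `{2,3}`. -/
theorem stmt9 (a b xt yt : ℤ) (hns : 4 * a ^ 3 + 27 * b ^ 2 ≠ 0)
    (hmin : ¬ ∃ p : ℕ, p.Prime ∧ (p : ℤ) ^ 4 ∣ a ∧ (p : ℤ) ^ 6 ∣ b)
    (ht : yt ^ 2 = xt ^ 3 + a * xt + b) :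
    ¬ ∃ p : ℕ, p.Prime ∧ 3 < p ∧ (p : ℤ) ^ 2 ∣ 6 * xt ∧ (p : ℤ) ^ 3 ∣ 8 * yt ∧
      (p : ℤ) ^ 4 ∣ 3 * xt ^ 2 + 4 * a := by
  rintro ⟨p, hp, hp3, h2, h3, h4⟩
  apply hmin
  have hpz : Prime (p : ℤ) := (Nat.prime_iff_prime_int.mp hp)
  have hnd6 : ¬ (p : ℤ) ∣ 6 := by
    intro h
    have hd : p ∣ 6 := Int.ofNat_dvd.mp (by exact_mod_cast h)
    have hle := Nat.le_of_dvd (by norm_num) hd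
    interval_cases p <;> revert hp hd <;> decide
  have hnd8 : ¬ (p : ℤ) ∣ 8 := by
    intro h
    have h2' : (p : ℤ) ∣ 2 := hpz.dvd_of_dvd_pow (n := 3) (by norm_num at h ⊢; exact h)
    exact hnd6 (dvd_trans h2' (by norm_num))
  have hc6 : IsCoprime ((p : ℤ) ^ 2) 6 :=
    IsCoprime.pow_left ((hpz.coprime_iff_not_dvd).mpr hnd6)
  have hc8 : IsCoprime ((p : ℤ) ^ 3) 8 :=
    IsCoprime.pow_left ((hpz.coprime_iff_not_dvd).mpr hnd8)
  have hxt : (p : ℤ) ^ 2 ∣ xt := hc6.dvd_of_dvd_mul_left h2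
  have hyt : (p : ℤ) ^ 3 ∣ yt := hc8.dvd_of_dvd_mul_left h3
  have hc4 : IsCoprime ((p : ℤ) ^ 4) 4 := by
    apply IsCoprime.pow_left
    apply (hpz.coprime_iff_not_dvd).mpr
    intro h
    exact hnd8 (dvd_trans h (by norm_num))
  have hxt4 : (p : ℤ) ^ 4 ∣ 3 * xt ^ 2 := by
    have : (p : ℤ) ^ 4 ∣ xt ^ 2 := by
      have := pow_dvd_pow_of_dvd hxt 2
      simpa [← pow_mul] using this
    exact this.mul_left 3
  have ha : (p : ℤ) ^ 4 ∣ a := by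
    have h4a : (p : ℤ) ^ 4 ∣ 4 * a := by
      have := dvd_sub h4 hxt4
      simpa using this
    exact hc4.dvd_of_dvd_mul_left h4a
  refine ⟨p, hp, ha, ?_⟩
  have hb : b = yt ^ 2 - xt ^ 3 - a * xt := by linarith
  rw [hb]
  have h1 : (p : ℤ) ^ 6 ∣ yt ^ 2 := by
    have := pow_dvd_pow_of_dvd hyt 2
    simpa [← pow_mul] using this
  have h2' : (p : ℤ) ^ 6 ∣ xt ^ 3 := by
    have := pow_dvd_pow_of_dvd hxt 3
    simpa [← pow_mul] using this
  have h3' : (p : ℤ) ^ 6 ∣ a * xt := by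
    have := mul_dvd_mul ha hxt
    simpa [← pow_add] using this
  exact dvd_sub (dvd_sub h1 h2') h3'
end

section
/- Let a, a', b, b' be integers and let (x_t, y_t), (x_{t'}, y_{t'}) be integer points on y² = x³ + ax + b and y² = x³ + a'x + b' respectively. Suppose g ∈ GL₂(ℤ) fixes the vector (1,0) and transforms the quartic Q = u⁴ - 6x_t u²v² - 8y_t uv³ - (3x_t² + 4a)v⁴ into Q' = u⁴ - 6x_{t'} u²v² - 8y_{t'} uv³ - (3x_{t'}² + 4a')v⁴ (under linear change of variables). Then a = a', b = b', x_t = x_{t'}, and y_t = ±y_{t'}. -/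
open Matrix

/-- injectivity of the descent map. If `g ∈ GL₂(ℤ)` fixes the vector `(1,0)`
and transforms the quartic associated to `(a, b, x_t, y_t)` into the one associated to
`(a', b', x_{t'}, y_{t'})`, then `a = a'`, `b = b'`, `x_t = x_{t'}` and `y_t = ±y_{t'}`. -/
theorem stmt10 (a a' b b' xt yt xt' yt' : ℤ)
    (ht : yt ^ 2 = xt ^ 3 + a * xt + b)
    (ht' : yt' ^ 2 = xt' ^ 3 + a' * xt' + b')
    (g : GL (Fin 2) ℤ)
    (hfix : (g : Matrix (Fin 2) (Fin 2) ℤ).mulVec ![1, 0] = ![1, 0])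
    (htrans : ∀ u v : ℤ,
      letI u' := (g : Matrix (Fin 2) (Fin 2) ℤ) 0 0 * u + (g : Matrix (Fin 2) (Fin 2) ℤ) 0 1 * v
      letI v' := (g : Matrix (Fin 2) (Fin 2) ℤ) 1 0 * u + (g : Matrix (Fin 2) (Fin 2) ℤ) 1 1 * v
      u' ^ 4 - 6 * xt * u' ^ 2 * v' ^ 2 - 8 * yt * u' * v' ^ 3 - (3 * xt ^ 2 + 4 * a) * v' ^ 4
        = u ^ 4 - 6 * xt' * u ^ 2 * v ^ 2 - 8 * yt' * u * v ^ 3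
          - (3 * xt' ^ 2 + 4 * a') * v ^ 4) :
    a = a' ∧ b = b' ∧ xt = xt' ∧ (yt = yt' ∨ yt = -yt') := by
  set M := (g : Matrix (Fin 2) (Fin 2) ℤ) with hM
  have h00 : M 0 0 = 1 := by
    have := congr_fun hfix 0
    simpa [Matrix.mulVec, dotProduct, Fin.sum_univ_two] using this
  have h10 : M 1 0 = 0 := by
    have := congr_fun hfix 1
    simpa [Matrix.mulVec, dotProduct, Fin.sum_univ_two] using this
  have hdet : IsUnit M.det := (Matrix.isUnit_iff_isUnit_det M).mp g.isUnit
  have he : M 1 1 = 1 ∨ M 1 1 = -1 := by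
    rcases Int.isUnit_iff.mp hdet with h | h <;>
      rw [Matrix.det_fin_two, h00, h10] at h <;> [left; right] <;> linarith
  set p := M 0 1 with hpdef
  set e := M 1 1 with hedef
  have h0 := htrans 0 1
  have h1 := htrans 1 1
  have h2 := htrans (-1) 1
  have h3 := htrans 2 1
  have h4 := htrans (-2) 1
  simp only [h00, h10, one_mul, zero_mul, zero_add, mul_one, mul_zero, add_zero,
    mul_neg, neg_add_rev] at h0 h1 h2 h3 h4
  have h48 : 48 * p = 0 := by linear_combination h3 - h4 - 2 * h1 + 2 * h2
  have hp : p = 0 := by omega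
  rw [hp] at h0 h1 h2
  rcases he with he | he <;> rw [he] at h0 h1 h2
  · have hyt : 16 * yt = 16 * yt' := by linear_combination h2 - h1
    have hy : yt = yt' := by omega
    have hxt12 : 12 * xt = 12 * xt' := by linear_combination (-1) * h1 - h2 + 2 * h0
    have hx : xt = xt' := by omega
    have ha4 : 4 * a = 4 * a' := by
      linear_combination (-1) * h0 - 3 * (xt + xt') * hx
    have ha : a = a' := by omega
    subst hx hy ha
    exact ⟨rfl, by linear_combination ht' - ht, rfl, Or.inl rfl⟩
  · have hyt : 16 * yt = -(16 * yt') := by linear_combination h1 - h2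
    have hy : yt = -yt' := by omega
    have hxt12 : 12 * xt = 12 * xt' := by linear_combination (-1) * h1 - h2 + 2 * h0
    have hx : xt = xt' := by omega
    have ha4 : 4 * a = 4 * a' := by
      linear_combination (-1) * h0 - 3 * (xt + xt') * hx
    have ha : a = a' := by omega
    subst hx hy ha
    exact ⟨rfl, by linear_combination ht' - ht, rfl, Or.inr rfl⟩
end
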